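/- Let M be a positive integer, let A be a positive definite real M×M matrix, let σ > 0, let v̂, z ∈ ℝ^M, and let q₀ ∈ ℝ. Then ∫_{ℝ^M} exp(−(1/2)(z − ε − v̂)ᵀ A (z − ε − v̂) + q₀) · (2πσ²)^{−M/2} exp(−‖ε‖²/(2σ²)) dε = exp(q₀) · σ^{−M} · (det(A + σ⁻²·I))^{−1/2} · exp(−(1/2)(z − v̂)ᵀ (A⁻¹ + σ²·I)⁻¹ (z − v̂)), where the integral is with respect to Lebesgue measure on ℝ^M. -/

import Mathlib

open Matrix MeasureTheory Real
open scoped MatrixOrder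

lemma psd_det_nonneg {n : ℕ} {C : Matrix (Fin n) (Fin n) ℝ} (hC : C.PosSemidef) :
    0 ≤ C.det := by
  rw [hC.1.det_eq_prod_eigenvalues]
  exact Finset.prod_nonneg fun i _ => by
    simpa using hC.eigenvalues_nonneg i

lemma gaussian_int {M : ℕ} (B : Matrix (Fin M) (Fin M) ℝ) (hB : B.PosDef) :
    ∫ x : Fin M → ℝ, Real.exp (-(1/2) * (x ⬝ᵥ B *ᵥ x)) =
      Real.sqrt (2 * π) ^ M / Real.sqrt B.det := by
  classical
  set C := CFC.sqrt B with hCdef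
  have hCC : C * C = B := CFC.sqrt_mul_sqrt_self B hB.posSemidef.nonneg
  have hCsym : Cᵀ = C := by
    have h := (CFC.sqrt_nonneg B).posSemidef.1
    rwa [Matrix.IsHermitian, conjTranspose_eq_transpose_of_trivial] at h
  have hdetB : 0 < B.det := hB.det_pos
  have hdetC2 : C.det * C.det = B.det := by rw [← det_mul, hCC]
  have hdetCnn : 0 ≤ C.det := psd_det_nonneg (CFC.sqrt_nonneg B).posSemidef
  have hdetC : C.det = Real.sqrt B.det := by
    rw [← hdetC2, Real.sqrt_mul_self hdetCnn]
  have hdetCpos : 0 < C.det := by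
    rw [hdetC]; exact Real.sqrt_pos.mpr hdetB
  -- rewrite the quadratic form
  have hquad : ∀ x : Fin M → ℝ, x ⬝ᵥ B *ᵥ x = (C *ᵥ x) ⬝ᵥ (C *ᵥ x) := by
    intro x
    conv_lhs => rw [← hCC, ← Matrix.mulVec_mulVec, Matrix.dotProduct_mulVec, ← hCsym,
      Matrix.vecMul_transpose, hCsym]
  simp_rw [hquad]
  -- change of variables
  have hlin : LinearMap.det (Matrix.toLin' C) ≠ 0 := by
    rw [LinearMap.det_toLin']; exact hdetCpos.ne'
  have hmap := Real.map_linearMap_volume_pi_eq_smul_volume_pi hlin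
  rw [LinearMap.det_toLin'] at hmap
  have hmeas : Measurable (Matrix.toLin' C) :=
    (LinearMap.continuous_on_pi _).measurable
  have hcont : Continuous fun y : Fin M → ℝ => Real.exp (-(1/2) * (y ⬝ᵥ y)) := by
    apply Real.continuous_exp.comp
    apply Continuous.mul continuous_const
    unfold dotProduct
    exact continuous_finset_sum _ fun i _ =>
      ((continuous_apply i).mul (continuous_apply i))
  have step1 : ∫ x : Fin M → ℝ, Real.exp (-(1/2) * ((C *ᵥ x) ⬝ᵥ (C *ᵥ x)))
      = ∫ y, Real.exp (-(1/2) * (y ⬝ᵥ y))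
          ∂(Measure.map (Matrix.toLin' C) volume) := by
    rw [integral_map hmeas.aemeasurable hcont.aestronglyMeasurable]
    simp [Matrix.toLin'_apply]
  rw [step1, hmap, integral_smul_measure]
  have habs : |C.det⁻¹| = C.det⁻¹ := abs_of_pos (by positivity)
  rw [ENNReal.toReal_ofReal (by positivity)]
  -- compute the standard Gaussian integral
  have hstd : ∫ y : Fin M → ℝ, Real.exp (-(1/2) * (y ⬝ᵥ y))
      = Real.sqrt (2 * π) ^ M := by
    have : ∀ y : Fin M → ℝ, Real.exp (-(1/2) * (y ⬝ᵥ y))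
        = ∏ i, Real.exp (-(1/2) * (y i ^ 2)) := by
      intro y
      rw [← Real.exp_sum]
      congr 1
      rw [dotProduct, Finset.mul_sum]
      exact Finset.sum_congr rfl fun i _ => by ring
    simp_rw [this]
    rw [volume_pi, integral_fintype_prod_eq_pow (ι := Fin M) (fun t : ℝ => Real.exp (-(1/2) * t ^ 2))]
    · congr 1
      · have := integral_gaussian (1/2 : ℝ)
        simp_rw [neg_mul] at this ⊢
        rw [this]
        rw [div_div_eq_mul_div, div_one, mul_comm]
      · simp
  rw [hstd, smul_eq_mul, habs, hdetC]
  field_simp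

lemma dot_symm {M : ℕ} {C : Matrix (Fin M) (Fin M) ℝ} (h : Cᵀ = C) (x y : Fin M → ℝ) :
    x ⬝ᵥ C *ᵥ y = y ⬝ᵥ C *ᵥ x := by
  rw [Matrix.dotProduct_mulVec]
  conv_lhs => rw [← h]
  rw [Matrix.vecMul_transpose, dotProduct_comm]

lemma quad_expand {M : ℕ} {C : Matrix (Fin M) (Fin M) ℝ} (h : Cᵀ = C) (a b : Fin M → ℝ) :
    (a - b) ⬝ᵥ C *ᵥ (a - b) = a ⬝ᵥ C *ᵥ a - 2 * (b ⬝ᵥ C *ᵥ a) + b ⬝ᵥ C *ᵥ b := by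
  rw [Matrix.mulVec_sub, dotProduct_sub, sub_dotProduct, sub_dotProduct, dot_symm h a b]
  ring

/-- Closed-form Gaussian integral in the Laplace approximation of the marginal
likelihood of point observations (Proposition 3): for positive definite `A`,
`σ > 0`, `v̂, z ∈ ℝ^M` and `q₀ ∈ ℝ`,
`∫ exp(−½ (z−ε−v̂)ᵀA(z−ε−v̂) + q₀) (2πσ²)^{−M/2} exp(−‖ε‖²/(2σ²)) dε
  = exp(q₀) σ^{−M} det(A + σ⁻²I)^{−1/2}
      exp(−½ (z−v̂)ᵀ (A⁻¹+σ²I)⁻¹ (z−v̂))`. -/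
theorem stmt_2 (M : ℕ) (hM : 0 < M) (A : Matrix (Fin M) (Fin M) ℝ)
    (hA : A.PosDef) (σ : ℝ) (hσ : 0 < σ) (vhat z : Fin M → ℝ) (q₀ : ℝ) :
    ∫ ε : Fin M → ℝ,
        Real.exp (-(1 / 2) * ((z - ε - vhat) ⬝ᵥ (A *ᵥ (z - ε - vhat))) + q₀)
          * ((2 * π * σ ^ 2) ^ (-(M : ℝ) / 2) * Real.exp (-(ε ⬝ᵥ ε) / (2 * σ ^ 2)))
      = Real.exp q₀ * σ ^ (-(M : ℝ))
          * ((A + (σ ^ 2)⁻¹ • (1 : Matrix (Fin M) (Fin M) ℝ)).det) ^ (-(1 : ℝ) / 2)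
          * Real.exp (-(1 / 2) * ((z - vhat) ⬝ᵥ
              (((A⁻¹ + σ ^ 2 • (1 : Matrix (Fin M) (Fin M) ℝ))⁻¹) *ᵥ (z - vhat)))) := by
  classical
  have hσ2 : (0:ℝ) < σ ^ 2 := by positivity
  obtain ⟨m, hm⟩ : ∃ m : Fin M → ℝ, z - vhat = m := ⟨_, rfl⟩
  obtain ⟨B, hBdef⟩ : ∃ B : Matrix (Fin M) (Fin M) ℝ, A + (σ ^ 2)⁻¹ • 1 = B := ⟨_, rfl⟩
  rw [hm, hBdef]
  have hIpsd : ((σ ^ 2)⁻¹ • (1 : Matrix (Fin M) (Fin M) ℝ)).PosSemidef := by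
    exact Matrix.PosSemidef.one.smul (inv_nonneg.mpr hσ2.le)
  have hBpd : B.PosDef := hBdef ▸ hA.add_posSemidef hIpsd
  have hAu : IsUnit A.det := hA.det_pos.ne'.isUnit
  have hBu : IsUnit B.det := hBpd.det_pos.ne'.isUnit
  have h1 : A * A⁻¹ = 1 := A.mul_nonsing_inv hAu
  have h2 : B⁻¹ * B = 1 := B.nonsing_inv_mul hBu
  have h2' : B * B⁻¹ = 1 := B.mul_nonsing_inv hBu
  have Asym : Aᵀ = A := by
    have h := hA.1; rwa [Matrix.IsHermitian, conjTranspose_eq_transpose_of_trivial] at h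
  have Bsym : Bᵀ = B := by
    have h := hBpd.1; rwa [Matrix.IsHermitian, conjTranspose_eq_transpose_of_trivial] at h
  -- matrix identity : (A⁻¹ + σ²•1)⁻¹ = A - A * B⁻¹ * A
  have hsB : σ ^ 2 • B = 1 + σ ^ 2 • A := by
    rw [← hBdef, smul_add, smul_smul, mul_inv_cancel₀ hσ2.ne', one_smul, add_comm]
  have key2 : A * B⁻¹ + σ ^ 2 • (A * B⁻¹ * A) = σ ^ 2 • A := by
    have h3 : A * B⁻¹ * (σ ^ 2 • B) = σ ^ 2 • A := by
      rw [Matrix.mul_smul, mul_assoc, h2, mul_one]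
    rw [hsB, mul_add, mul_one, Matrix.mul_smul] at h3
    exact h3
  have expand : (A - A * B⁻¹ * A) * (A⁻¹ + σ ^ 2 • (1 : Matrix (Fin M) (Fin M) ℝ)) = 1 := by
    have e1 : (A * B⁻¹ * A) * A⁻¹ = A * B⁻¹ := by rw [mul_assoc, h1, mul_one]
    rw [Matrix.sub_mul, Matrix.mul_add, Matrix.mul_add, h1, e1,
      Matrix.mul_smul, mul_one, Matrix.mul_smul, mul_one, key2, add_sub_cancel_right]
  have hS : (A⁻¹ + σ ^ 2 • (1 : Matrix (Fin M) (Fin M) ℝ))⁻¹ = A - A * B⁻¹ * A :=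
    Matrix.inv_eq_left_inv expand
  rw [hS]
  obtain ⟨P, hPdef⟩ : ∃ P : Matrix (Fin M) (Fin M) ℝ, A * B⁻¹ * A = P := ⟨_, rfl⟩
  rw [hPdef]
  obtain ⟨μv, hμ⟩ : ∃ μv : Fin M → ℝ, B⁻¹ *ᵥ (A *ᵥ m) = μv := ⟨_, rfl⟩
  -- dot product identities
  have e2 : ∀ ε : Fin M → ℝ, ε ⬝ᵥ B *ᵥ ε = ε ⬝ᵥ A *ᵥ ε + (σ ^ 2)⁻¹ * (ε ⬝ᵥ ε) := by
    intro ε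
    rw [← hBdef, Matrix.add_mulVec, dotProduct_add, Matrix.smul_mulVec,
      Matrix.one_mulVec, dotProduct_smul, smul_eq_mul]
  have e3 : B *ᵥ μv = A *ᵥ m := by
    rw [← hμ, Matrix.mulVec_mulVec, h2', Matrix.one_mulVec]
  have e5 : μv ⬝ᵥ (A *ᵥ m) = m ⬝ᵥ P *ᵥ m := by
    rw [dot_symm Asym μv m, ← hμ, Matrix.mulVec_mulVec, Matrix.mulVec_mulVec, hPdef]
  have e4 : ∀ ε : Fin M → ℝ, (ε - μv) ⬝ᵥ B *ᵥ (ε - μv)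
      = ε ⬝ᵥ B *ᵥ ε - 2 * (ε ⬝ᵥ A *ᵥ m) + m ⬝ᵥ P *ᵥ m := by
    intro ε
    rw [quad_expand Bsym ε μv, dot_symm Bsym μv ε, e3, e5]
  have e6 : m ⬝ᵥ (A - P) *ᵥ m = m ⬝ᵥ A *ᵥ m - m ⬝ᵥ P *ᵥ m := by
    rw [Matrix.sub_mulVec, dotProduct_sub]
  -- pointwise rewriting of the integrand
  have key : ∀ ε : Fin M → ℝ,
      Real.exp (-(1 / 2) * ((z - ε - vhat) ⬝ᵥ (A *ᵥ (z - ε - vhat))) + q₀)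
          * ((2 * π * σ ^ 2) ^ (-(M : ℝ) / 2) * Real.exp (-(ε ⬝ᵥ ε) / (2 * σ ^ 2)))
        = ((2 * π * σ ^ 2) ^ (-(M : ℝ) / 2)
            * (Real.exp q₀ * Real.exp (-(1 / 2) * (m ⬝ᵥ (A - P) *ᵥ m))))
            * Real.exp (-(1 / 2) * ((ε - μv) ⬝ᵥ B *ᵥ (ε - μv))) := by
    intro ε
    have hz : z - ε - vhat = m - ε := by rw [← hm]; abel
    rw [hz]
    have hexp : (-(1 / 2) * ((m - ε) ⬝ᵥ A *ᵥ (m - ε)) + q₀) + (-(ε ⬝ᵥ ε) / (2 * σ ^ 2))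
        = (q₀ + -(1 / 2) * (m ⬝ᵥ (A - P) *ᵥ m))
          + (-(1 / 2) * ((ε - μv) ⬝ᵥ B *ᵥ (ε - μv))) := by
      rw [quad_expand Asym m ε, e4 ε, e2 ε, e6]
      field_simp
      ring
    calc Real.exp (-(1 / 2) * ((m - ε) ⬝ᵥ A *ᵥ (m - ε)) + q₀)
          * ((2 * π * σ ^ 2) ^ (-(M : ℝ) / 2) * Real.exp (-(ε ⬝ᵥ ε) / (2 * σ ^ 2)))
        = (2 * π * σ ^ 2) ^ (-(M : ℝ) / 2)
            * Real.exp ((-(1 / 2) * ((m - ε) ⬝ᵥ A *ᵥ (m - ε)) + q₀)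
                + (-(ε ⬝ᵥ ε) / (2 * σ ^ 2))) := by
          simp only [Real.exp_add]; ring
      _ = _ := by
          rw [hexp]; simp only [Real.exp_add]; ring
  simp_rw [key]
  rw [integral_const_mul]
  rw [integral_sub_right_eq_self (μ := volume)
    (fun y : Fin M → ℝ => Real.exp (-(1 / 2) * (y ⬝ᵥ B *ᵥ y))) μv]
  rw [gaussian_int B hBpd]
  -- final scalar arithmetic
  have hdetB : (0:ℝ) < B.det := hBpd.det_pos
  have h2π : (0:ℝ) < 2 * π := by positivity
  have hbase : (0:ℝ) ≤ 2 * π * σ ^ 2 := by positivity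
  have hd : B.det ^ (-(1:ℝ) / 2) = (Real.sqrt B.det)⁻¹ := by
    rw [neg_div, Real.rpow_neg hdetB.le, ← Real.sqrt_eq_rpow]
  have hu : (2 * π * σ ^ 2) ^ (-(1:ℝ) / 2) = (Real.sqrt (2 * π) * σ)⁻¹ := by
    rw [neg_div, Real.rpow_neg hbase, ← Real.sqrt_eq_rpow,
      Real.sqrt_mul h2π.le, Real.sqrt_sq hσ.le]
  have hc : (2 * π * σ ^ 2) ^ (-(M : ℝ) / 2) = ((Real.sqrt (2 * π) * σ)⁻¹) ^ M := by
    have hrw : -(M : ℝ) / 2 = (-(1:ℝ) / 2) * (M : ℕ) := by push_cast; ring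
    rw [hrw, Real.rpow_mul hbase, Real.rpow_natCast, hu]
  have hσM : σ ^ (-(M : ℝ)) = (σ⁻¹) ^ M := by
    rw [Real.rpow_neg hσ.le, Real.rpow_natCast, inv_pow]
  rw [hd, hc, hσM]
  have hs2π : (0:ℝ) < Real.sqrt (2 * π) := Real.sqrt_pos.mpr h2π
  have hsd : (0:ℝ) < Real.sqrt B.det := Real.sqrt_pos.mpr hdetB
  field_simp [mul_inv]
  ring_nf
  rw [← mul_pow, mul_inv_cancel₀ (Real.sqrt_pos.mpr (by positivity : (0:ℝ) < π * 2)).ne',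
    one_pow, one_mul]
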